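/- Let G consist of p disjoint chains C₁,…,C_p with integer node costs. The schedule obtained by decomposing each chain into humps and concatenating all humps in standard order (negative-cost humps first in nondecreasing order of height, then nonnegative-cost humps in nonincreasing order of reverse height, with humps from the same chain kept in their chain order) is an optimal schedule of G, i.e., it attains the minimum height over all schedules of G. -/

import Mathlib

def cost (L : List ℤ) : ℤ := L.sum

def height (L : List ℤ) : ℤ :=
  ((List.range (L.length + 1)).map fun k => (L.take k).sum).foldr max 0

def fall (L : List ℤ) : ℤ := height L - cost L

variable {p : ℕ}

/-- Realize a word of chain indices as the sequence of node costs obtained by,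
at each step, consuming the next unused node of the indicated chain. -/
def realize (C : Fin p → List ℤ) : List (Fin p) → List ℤ
  | [] => []
  | i :: w => (C i).headD 0 :: realize (Function.update C i (C i).tail) w

/-- A schedule of the chain graph `C`: a word using each chain exactly up to
its length (a linear extension, realized chainwise). -/
def IsSched (C : Fin p → List ℤ) (w : List (Fin p)) : Prop :=
  ∀ i, w.count i = (C i).length

/-- A subschedule: a prefix of some schedule. -/
def IsSub (C : Fin p → List ℤ) (w : List (Fin p)) : Prop :=
  ∀ i, w.count i ≤ (C i).length

/-- positions in `u` at which chain `i` is scheduled. -/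
def occIdx (u : List (Fin p)) (i : Fin p) : List ℕ :=
  (List.range u.length).filter fun t => decide (u[t]? = some i)

/-- In the word `u`, node number `a` (0-based) of chain `i` occurs before node
number `b` of chain `j`. -/
def Precedes (u : List (Fin p)) (i : Fin p) (a : ℕ) (j : Fin p) (b : ℕ) : Prop :=
  ∃ s t, (occIdx u i)[a]? = some s ∧ (occIdx u j)[b]? = some t ∧ s < t

/-- A subschedule is valid when, at every prefix, the number of `P` operations
(+1) does not exceed the number of `V` operations (−1). -/
def ValidWord (C : Fin p → List ℤ) (u : List (Fin p)) : Prop :=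
  ∀ t, ((realize C u).take t).sum ≤ 0

/-- `H` is a hump: it has a useful peak at index `k`. -/
def IsHump (H : List ℤ) : Prop :=
  H ≠ [] ∧ ∃ k < H.length,
    (∀ m < H.length, (H.take (m + 1)).sum ≤ (H.take (k + 1)).sum) ∧
    (∀ m < k, 0 ≤ (H.take (m + 1)).sum) ∧
    (∀ m, k < m → m < H.length → cost H ≤ (H.take (m + 1)).sum)

/-- Monotonicity property of the canonical hump decomposition. -/
def StdMono (H₁ H₂ : List ℤ) : Prop :=
  (0 ≤ cost H₁ → 0 ≤ cost H₂ ∧ fall H₂ < fall H₁) ∧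
  (cost H₂ < 0 → cost H₁ < 0 ∧ height H₁ < height H₂)

/-- `D` is the canonical hump decomposition of `C`. -/
def IsDecomp (C : List ℤ) (D : List (List ℤ)) : Prop :=
  D.flatten = C ∧ (∀ H ∈ D, IsHump H) ∧ D.Pairwise StdMono ∧
    List.Chain' (fun H₁ H₂ => ¬ IsHump (H₁ ++ H₂)) D

/-- `StandardPair B A` : the series `B A` (with `B` first) is in standard order. -/
def StandardPair (B A : List ℤ) : Prop :=
  (cost B < 0 ∧ cost A < 0 ∧ height B ≤ height A) ∨
  (0 ≤ cost B ∧ 0 ≤ cost A ∧ fall A ≤ fall B) ∨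
  (cost B < 0 ∧ 0 ≤ cost A)

section HeightBasics

lemma fm_le {l : List ℤ} {b c : ℤ} : l.foldr max b ≤ c ↔ b ≤ c ∧ ∀ a ∈ l, a ≤ c := by
  induction l with
  | nil => simp
  | cons x t ih => simp [List.foldr_cons, max_le_iff, ih]; tauto

lemma sum_take_le_height (L : List ℤ) (t : ℕ) : (L.take t).sum ≤ height L := by
  have h := le_refl (height L)
  rw [height, fm_le] at h
  rcases le_or_gt t L.length with ht | ht
  · exact h.2 _ (List.mem_map.mpr ⟨t, List.mem_range.mpr (by omega), rfl⟩)
  · rw [List.take_of_length_le (by omega)]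
    have := h.2 ((L.take L.length).sum) (List.mem_map.mpr ⟨L.length, List.mem_range.mpr (by omega), rfl⟩)
    simpa [height] using this

lemma height_nonneg (L : List ℤ) : 0 ≤ height L := by
  have h := le_refl (height L)
  rw [height, fm_le] at h
  exact h.1

lemma height_le {L : List ℤ} {b : ℤ} (h0 : 0 ≤ b)
    (h : ∀ t, t ≤ L.length → (L.take t).sum ≤ b) : height L ≤ b := by
  rw [height, fm_le]
  refine ⟨h0, ?_⟩
  intro a ha
  rcases List.mem_map.mp ha with ⟨k, hk, rfl⟩
  exact h k (by simpa using Nat.lt_succ_iff.mp (List.mem_range.mp hk))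

lemma cost_le_height (L : List ℤ) : cost L ≤ height L := by
  simpa [cost] using sum_take_le_height L L.length

lemma fall_nonneg (L : List ℤ) : 0 ≤ fall L := by
  have := cost_le_height L; simp [fall]; omega

@[simp] lemma height_nil : height ([] : List ℤ) = 0 := by
  simp [height]

lemma height_cons (x : ℤ) (L : List ℤ) : height (x :: L) = max 0 (x + height L) := by
  apply le_antisymm
  · apply height_le (le_max_left _ _)
    intro t ht
    cases t with
    | zero => simp
    | succ t =>
      rw [List.take_succ_cons]
      have := sum_take_le_height L t
      simp only [List.sum_cons]
      have : x + (L.take t).sum ≤ x + height L := by omega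
      exact le_trans this (le_max_right _ _)
  · rw [max_le_iff]
    constructor
    · exact height_nonneg _
    · have : height L ≤ height (x :: L) - x := by
        rw [height, fm_le]
        constructor
        · have := sum_take_le_height (x :: L) 1
          simp at this; omega
        · intro a ha
          rcases List.mem_map.mp ha with ⟨k, hk, rfl⟩
          have := sum_take_le_height (x :: L) (k + 1)
          rw [List.take_succ_cons] at this
          simp only [List.sum_cons] at this
          omega
      omega

lemma height_append (L M : List ℤ) : height (L ++ M) = max (height L) (cost L + height M) := by
  induction L with
  | nil => simp [cost, max_eq_right (height_nonneg M)]
  | cons x t ih =>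
    simp only [List.cons_append, height_cons, ih, cost, List.sum_cons]
    have h1 : 0 ≤ height t := height_nonneg t
    have h2 : 0 ≤ height M := height_nonneg M
    rcases le_total (height t) (t.sum + height M) with h | h <;>
      simp [max_def] <;> omega

lemma height_prefix_le (L M : List ℤ) : height L ≤ height (L ++ M) := by
  rw [height_append]; exact le_max_left _ _

lemma sum_le_height (L : List ℤ) : L.sum ≤ height L := cost_le_height L

end HeightBasics

section NLsec

def NL (L : List ℤ) : List ℤ := (L.reverse).map (fun x => -x)

@[simp] lemma NL_nil : NL ([] : List ℤ) = [] := rfl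

@[simp] lemma length_NL (L : List ℤ) : (NL L).length = L.length := by simp [NL]

lemma sum_map_neg (l : List ℤ) : (l.map (fun x => -x)).sum = -l.sum := by
  induction l with
  | nil => simp
  | cons x t ih => simp [ih]; ring

@[simp] lemma cost_NL (L : List ℤ) : cost (NL L) = - cost L := by
  simp [NL, cost, sum_map_neg, List.sum_reverse]

lemma NL_append (L M : List ℤ) : NL (L ++ M) = NL M ++ NL L := by
  simp [NL]

lemma NL_concat (L : List ℤ) (x : ℤ) : NL (L ++ [x]) = (-x) :: NL L := by
  simp [NL]

lemma NL_NL (L : List ℤ) : NL (NL L) = L := by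
  simp [NL, List.map_reverse, Function.comp_def]

lemma fall_eq_height_NL (L : List ℤ) : fall L = height (NL L) := by
  induction L using List.reverseRecOn with
  | nil => simp [fall, cost, height_nil]
  | append_singleton L x ih =>
    rw [NL_concat, height_cons, ← ih]
    have h1 := fall_nonneg L
    simp only [fall, height_append, cost, List.sum_append, List.sum_cons, List.sum_nil,
      height_cons, height_nil]
    rcases le_total 0 x with h | h
    · rcases le_total (height L) (L.sum + max 0 (x + 0)) with h2 | h2 <;>
        simp [fall, cost, max_def] at * <;> omega
    · simp [fall, cost, max_def] at * <;> omega

lemma height_eq_cost_add_height_NL (L : List ℤ) : height L = cost L + height (NL L) := by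
  have := fall_eq_height_NL L; simp [fall] at this; omega

lemma sum_take_NL (L : List ℤ) (c : ℕ) (hc : c ≤ L.length) :
    ((NL L).take c).sum = (L.take (L.length - c)).sum - cost L := by
  have h1 : ((NL L).take c).sum = -((L.reverse.take c).sum) := by
    rw [NL, ← List.map_take, sum_map_neg]
  have h2 : (L.reverse.take c).sum + (L.reverse.drop c).sum = cost L := by
    rw [List.sum_take_add_sum_drop]; simp [cost, List.sum_reverse]
  have h3 : (L.reverse.drop c).sum = (L.take (L.length - c)).sum := by
    rw [List.drop_reverse]
    simp [List.sum_reverse]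
  omega

lemma NL_flatten (l : List (List ℤ)) : ((l.map NL).reverse).flatten = NL l.flatten := by
  induction l with
  | nil => simp
  | cons H T ih =>
    simp only [List.map_cons, List.reverse_cons, List.flatten_append, List.flatten_cons,
      List.flatten_nil, List.append_nil, ih, List.flatten_cons, NL_append]

end NLsec

section RealizeSec

@[simp] lemma realize_nil (C : Fin p → List ℤ) : realize C [] = [] := rfl

@[simp] lemma realize_cons (C : Fin p → List ℤ) (i : Fin p) (w : List (Fin p)) :
    realize C (i :: w) = (C i).headD 0 :: realize (Function.update C i (C i).tail) w := rfl

def sA (C : Fin p → List ℤ) (u : List (Fin p)) : Fin p → List ℤ :=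
  u.foldl (fun D i => Function.update D i (D i).tail) C

@[simp] lemma sA_nil (C : Fin p → List ℤ) : sA C [] = C := rfl

@[simp] lemma sA_cons (C : Fin p → List ℤ) (i u) :
    sA C (i :: u) = sA (Function.update C i (C i).tail) u := rfl

lemma realize_append (C : Fin p → List ℤ) (u v : List (Fin p)) :
    realize C (u ++ v) = realize C u ++ realize (sA C u) v := by
  induction u generalizing C with
  | nil => simp
  | cons i u ih => simp [ih]

lemma sA_eq_drop (C : Fin p → List ℤ) (u : List (Fin p)) (i : Fin p) :
    sA C u i = (C i).drop (u.count i) := by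
  induction u generalizing C with
  | nil => simp
  | cons j u ih =>
    rw [sA_cons, ih]
    rcases eq_or_ne i j with rfl | hij
    · rw [Function.update_self, ← List.drop_one, List.drop_drop]
      have : (i :: u).count i = u.count i + 1 := by simp [List.count_cons]
      rw [this, Nat.add_comm]
    · rw [Function.update_of_ne hij]
      have : (j :: u).count i = u.count i := by simp [List.count_cons, hij, Ne.symm hij]
      rw [this]

lemma headD_eq_of_take {L M : List ℤ} {c : ℕ} (hc : 0 < c) (h : L.take c = M.take c) :
    L.headD 0 = M.headD 0 := by
  obtain ⟨c', rfl⟩ : ∃ c', c = c' + 1 := ⟨c - 1, by omega⟩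
  cases L <;> cases M <;> simp_all [List.take_succ_cons]

lemma realize_congr {C C' : Fin p → List ℤ} (u : List (Fin p))
    (h : ∀ i, (C i).take (u.count i) = (C' i).take (u.count i)) :
    realize C u = realize C' u := by
  induction u generalizing C C' with
  | nil => simp
  | cons i u ih =>
    have hcnt : 0 < (i :: u).count i := by simp [List.count_cons]
    have hhead := headD_eq_of_take hcnt (h i)
    rw [realize_cons, realize_cons, hhead]
    congr 1
    apply ih
    intro j
    rcases eq_or_ne j i with rfl | hji
    · simp only [Function.update_self]
      have hj := h j
      have hc : (j :: u).count j = u.count j + 1 := by simp [List.count_cons]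
      rw [hc] at hj
      cases hC : C j with
      | nil => cases hC' : C' j with
        | nil => rfl
        | cons y t => rw [hC, hC'] at hj; simp at hj
      | cons x s => cases hC' : C' j with
        | nil => rw [hC, hC'] at hj; simp at hj
        | cons y t => rw [hC, hC'] at hj; simp [List.take_succ_cons] at hj; simp [hj.2]
    · simp only [Function.update_of_ne hji]
      have hj := h j
      have hc : (i :: u).count j = u.count j := by simp [List.count_cons, hji, Ne.symm hji]
      rw [hc] at hj; exact hj

lemma IsSub.cons {C : Fin p → List ℤ} {i : Fin p} {u : List (Fin p)}
    (h : IsSub C (i :: u)) : IsSub (Function.update C i (C i).tail) u := by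
  intro j
  have hj := h j
  rcases eq_or_ne j i with rfl | hji
  · simp only [Function.update_self, List.length_tail]
    simp [List.count_cons] at hj; omega
  · simp only [Function.update_of_ne hji]
    simp [List.count_cons, hji] at hj; omega

lemma IsSub.ne_nil {C : Fin p → List ℤ} {i : Fin p} {u : List (Fin p)}
    (h : IsSub C (i :: u)) : C i ≠ [] := by
  intro hc
  have := h i
  rw [hc] at this
  simp [List.count_cons] at this

lemma sum_realize {C : Fin p → List ℤ} {u : List (Fin p)} (h : IsSub C u) :
    (realize C u).sum = ∑ i, ((C i).take (u.count i)).sum := by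
  induction u generalizing C with
  | nil => simp
  | cons i u ih =>
    have hne := h.ne_nil
    rw [realize_cons, List.sum_cons, ih h.cons]
    have key : ∀ j, ((C j).take ((i :: u).count j)).sum
        = ((Function.update C i (C i).tail j).take (u.count j)).sum
          + (if j = i then (C i).headD 0 else 0) := by
      intro j
      rcases eq_or_ne j i with rfl | hji
      · simp only [Function.update_self, if_pos rfl]
        have hc : (j :: u).count j = u.count j + 1 := by simp [List.count_cons]
        rw [hc]
        cases hC : C j with
        | nil => exact absurd hC hne
        | cons x s => simp [List.take_succ_cons]; ring
      · simp [Function.update_of_ne hji, List.count_cons, hji, Ne.symm hji]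
    rw [Finset.sum_congr rfl (fun j _ => key j)]
    rw [Finset.sum_add_distrib]
    simp
    ring

lemma IsSub.prefix {C : Fin p → List ℤ} {u v : List (Fin p)}
    (h : IsSub C (u ++ v)) : IsSub C u := by
  intro i
  exact le_trans ((List.sublist_append_left u v).count_le i) (h i)

lemma realize_rev {C : Fin p → List ℤ} {u : List (Fin p)} (h : ∀ i, u.count i = (C i).length) :
    realize (fun i => NL (C i)) u.reverse = NL (realize C u) := by
  induction u using List.reverseRecOn generalizing C with
  | nil => simp [NL]
  | append_singleton u i ih =>
    have hcnt : u.count i + 1 = (C i).length := by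
      have := h i; simp [List.count_append, List.count_singleton] at this; omega
    have hcnt' : ∀ j, j ≠ i → u.count j = (C j).length := by
      intro j hj
      have := h j
      simp [List.count_append, List.count_singleton', Ne.symm hj] at this
      exact this
    have hCne : C i ≠ [] := by intro hc; rw [hc] at hcnt; simp at hcnt
    obtain ⟨L', x, hLx⟩ : ∃ L' x, C i = L' ++ [x] := by
      rcases List.eq_nil_or_concat (C i) with hc | ⟨L', x, hc⟩
      · exact absurd hc hCne
      · exact ⟨L', x, by simpa using hc⟩
    have hclen : u.count i = L'.length := by
      rw [hLx] at hcnt; simp at hcnt; omega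
    set C₂ : Fin p → List ℤ := Function.update C i L' with hC₂
    have hsub : ∀ j, u.count j = (C₂ j).length := by
      intro j
      rcases eq_or_ne j i with rfl | hji
      · simp [hC₂, Function.update_self, hclen]
      · simp [hC₂, Function.update_of_ne hji, hcnt' j hji]
    have hreal2 : realize C u = realize C₂ u := by
      apply realize_congr
      intro j
      rcases eq_or_ne j i with rfl | hji
      · simp only [hC₂, Function.update_self, hLx, hclen]
        rw [List.take_left, List.take_length]
      · simp [hC₂, Function.update_of_ne hji]
    -- RHS
    have hRHS : NL (realize C (u ++ [i])) = (-x) :: NL (realize C u) := by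
      rw [realize_append]
      have h1 : realize (sA C u) [i] = [x] := by
        simp only [realize_cons, realize_nil, sA_eq_drop, hLx, hclen]
        rw [List.drop_left]
        simp
      rw [h1, NL_concat]
    -- LHS
    have hupd : (Function.update (fun j => NL (C j)) i (NL (C i)).tail) = fun j => NL (C₂ j) := by
      funext j
      rcases eq_or_ne j i with rfl | hji
      · simp only [Function.update_self, hC₂, hLx, NL_concat]
        simp
      · simp [Function.update_of_ne hji, hC₂]
    rw [List.reverse_append]
    simp only [List.reverse_singleton, List.singleton_append, realize_cons]
    rw [hupd, ih hsub, hRHS, ← hreal2]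
    have : (NL (C i)).headD 0 = -x := by rw [hLx, NL_concat]; rfl
    rw [this, hreal2]

end RealizeSec

section HumpSec

def pref (H : List ℤ) (c : ℕ) : ℤ := (H.take c).sum

@[simp] lemma pref_zero (H : List ℤ) : pref H 0 = 0 := by simp [pref]

lemma pref_of_len_le {H : List ℤ} {c : ℕ} (h : H.length ≤ c) : pref H c = cost H := by
  simp [pref, cost, List.take_of_length_le h]

def SelOKat (H : List ℤ) (k : ℕ) : Prop :=
  k < H.length ∧ (∀ c ≤ k, 0 ≤ pref H c) ∧ (∀ c, k < c → cost H ≤ pref H c) ∧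
  height H = max 0 (pref H (k + 1))

lemma selokat_of_hump {H : List ℤ} (hH : IsHump H) : ∃ k, SelOKat H k := by
  obtain ⟨hne, k, hk, hmax, hpre, hpost⟩ := hH
  refine ⟨k, hk, ?_, ?_, ?_⟩
  · intro c hc
    cases c with
    | zero => simp
    | succ m => exact hpre m (by omega)
  · intro c hc
    rcases le_or_gt H.length c with h | h
    · rw [pref_of_len_le h]
    · obtain ⟨m, rfl⟩ : ∃ m, c = m + 1 := ⟨c - 1, by omega⟩
      rcases Nat.lt_or_ge k m with hkm | hkm
      · exact hpost m hkm (by omega)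
      · -- m = k since k < m+1 and m ≤ k
        have : m = k := by omega
        subst this
        have hlen : 0 < H.length := by omega
        have := hmax (H.length - 1) (by omega)
        have heq : H.length - 1 + 1 = H.length := by omega
        rw [heq] at this
        have : cost H ≤ (H.take (m + 1)).sum := by
          have hc' : (H.take H.length).sum = cost H := by simp [cost]
          omega
        exact this
  · apply le_antisymm
    · apply height_le (le_max_left _ _)
      intro t ht
      cases t with
      | zero => simp
      | succ m =>
        rcases Nat.lt_or_ge m H.length with h | h
        · exact le_trans (hmax m h) (le_max_right _ _)
        · omega
    · rw [max_le_iff]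
      exact ⟨height_nonneg _, sum_take_le_height _ _⟩

lemma allpref_nonneg {H : List ℤ} {k : ℕ} (hk : SelOKat H k) (hc : 0 ≤ cost H) :
    ∀ c, 0 ≤ pref H c := by
  intro c
  rcases le_or_gt c k with h | h
  · exact hk.2.1 c h
  · exact le_trans hc (hk.2.2.1 c h)

lemma dual_unsel {H : List ℤ} (hH : IsHump H) (hc : cost H < 0) :
    NL H ≠ [] ∧ ∀ c, 0 ≤ pref (NL H) c := by
  obtain ⟨k, hk⟩ := selokat_of_hump hH
  constructor
  · intro h
    have := length_NL H
    rw [h] at this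
    have : H.length = 0 := by simpa using this.symm
    exact hH.1 (List.length_eq_zero_iff.mp this)
  · intro c
    rcases le_or_gt c H.length with h | h
    · rw [pref, sum_take_NL H c h]
      have : cost H ≤ pref H (H.length - c) := by
        rcases le_or_gt (H.length - c) k with h2 | h2
        · exact le_trans (le_of_lt hc) (hk.2.1 _ h2)
        · exact hk.2.2.1 _ h2
      simp [pref] at this ⊢
      omega
    · have : pref (NL H) c = cost (NL H) := pref_of_len_le (by rw [length_NL]; omega)
      rw [this, cost_NL]
      omega

lemma height_eq_max_pref (H : List ℤ) : ∀ b, (∀ t, t ≤ H.length → pref H t ≤ b) → 0 ≤ b → height H ≤ b :=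
  fun b h h0 => height_le h0 h

lemma dual_sel {H : List ℤ} (hH : IsHump H) (hc : 0 ≤ cost H) :
    ∃ k', SelOKat (NL H) k' := by
  obtain ⟨k, hk⟩ := selokat_of_hump hH
  have hpos := allpref_nonneg hk hc
  have hlen : 0 < H.length := by
    rcases H with _ | _
    · exact absurd rfl hH.1
    · simp
  have hfall : height (NL H) = fall H := (fall_eq_height_NL H).symm
  have hprefNL : ∀ c ≤ H.length, pref (NL H) c = pref H (H.length - c) - cost H := by
    intro c hc'
    rw [pref, sum_take_NL H c hc']; rfl
  have hprefNL' : ∀ c, H.length < c → pref (NL H) c = - cost H := by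
    intro c hc'
    rw [pref_of_len_le (by rw [length_NL]; omega), cost_NL]
  have hmaxk : ∀ j', pref H j' ≤ pref H (k + 1) := by
    intro j'
    have h1 : pref H j' ≤ height H := sum_take_le_height _ _
    rw [hk.2.2.2] at h1
    have h2 : 0 ≤ pref H (k + 1) := hpos _
    omega
  rcases eq_or_lt_of_le (Nat.succ_le_of_lt hk.1) with hkl | hkl
  · -- k + 1 = H.length
    have hkl' : k + 1 = H.length := hkl
    have hkcost : pref H (k + 1) = cost H := by rw [hkl']; exact pref_of_len_le (le_refl _)
    refine ⟨0, by rw [length_NL]; omega, ?_, ?_, ?_⟩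
    · intro c hc'
      have : c = 0 := by omega
      subst this; simp
    · intro c hc'
      rw [cost_NL]
      rcases le_or_gt c H.length with h | h
      · rw [hprefNL c h]
        have := hpos (H.length - c)
        omega
      · rw [hprefNL' c h]
    · rw [hfall]
      have h1 : pref (NL H) (0 + 1) = pref H (H.length - 1) - cost H := hprefNL 1 (by omega)
      rw [h1]
      have h2 : pref H (H.length - 1) ≤ cost H := by
        have := hmaxk (H.length - 1)
        omega
      have hheight : height H = cost H := by
        apply le_antisymm
        · apply height_le hc
          intro t ht
          have := hmaxk t
          have h3 : pref H t ≤ cost H := by omega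
          exact h3
        · exact cost_le_height H
      simp [fall, hheight]
      omega
  · -- k + 1 < H.length
    set n := H.length with hn
    set S : Finset ℕ := (Finset.range n).filter (fun j => ∀ j' < n, pref H j' ≤ pref H j) with hS
    have hSne : S.Nonempty := by
      obtain ⟨j, hj, hjmax⟩ := Finset.exists_max_image (Finset.range n) (pref H) ⟨0, by simp; omega⟩
      exact ⟨j, by
        simp only [hS, Finset.mem_filter]
        constructor
        · exact hj
        · intro j' hj'
          exact hjmax j' (Finset.mem_range.mpr hj')⟩
    set j0 := S.max' hSne with hj0
    have hj0S : j0 ∈ S := S.max'_mem hSne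
    have hj0n : j0 < n := by
      have := hj0S; simp only [hS, Finset.mem_filter, Finset.mem_range] at this; exact this.1
    have hj0max : ∀ j' < n, pref H j' ≤ pref H j0 := by
      have := hj0S; simp only [hS, Finset.mem_filter] at this; exact this.2
    have hj0largest : ∀ j, j < n → pref H j0 ≤ pref H j → j ≤ j0 := by
      intro j hj hge
      apply Finset.le_max' S j
      simp only [hS, Finset.mem_filter, Finset.mem_range]
      exact ⟨hj, fun j' hj' => le_trans (hj0max j' hj') hge⟩
    have hj0k : k + 1 ≤ j0 := hj0largest (k + 1) hkl (hmaxk j0)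
    have hj0val : pref H j0 = pref H (k + 1) :=
      le_antisymm (hmaxk j0) (hj0max (k + 1) hkl)
    have hheight : height H = pref H j0 := by
      rw [hk.2.2.2, hj0val.symm]
      have := hpos j0
      omega
    refine ⟨n - 1 - j0, by rw [length_NL]; omega, ?_, ?_, ?_⟩
    · intro c hc'
      rw [hprefNL c (by omega)]
      have h2 : k < n - c := by omega
      have := hk.2.2.1 (n - c) h2
      omega
    · intro c hc'
      rw [cost_NL]
      rcases le_or_gt c n with h | h
      · rw [hprefNL c h]
        have := hpos (n - c)
        omega
      · rw [hprefNL' c h]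
    · rw [hfall]
      have harith : n - (n - 1 - j0 + 1) = j0 := by omega
      rw [hprefNL (n - 1 - j0 + 1) (by omega), harith]
      have hcost : cost H ≤ pref H j0 := by
        have h1 : pref H n = cost H := pref_of_len_le (le_refl _)
        have := hmaxk n
        omega
      simp [fall, hheight]
      omega

end HumpSec

section CselSec

def HumpOK (sel : List ℤ → Bool) (H : List ℤ) : Prop :=
  if sel H = true then ∃ k, SelOKat H k else (H ≠ [] ∧ ∀ c, 0 ≤ pref H c)

open Classical in
noncomputable def kk (sel : List ℤ → Bool) (H : List ℤ) : ℕ :=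
  if h : ∃ k, SelOKat H k then (if sel H then h.choose else 0) else 0

lemma kk_sel {sel : List ℤ → Bool} {H : List ℤ} (hs : sel H = true) (h : HumpOK sel H) :
    SelOKat H (kk sel H) := by
  rw [HumpOK, if_pos hs] at h
  rw [kk, dif_pos h, if_pos hs]
  exact h.choose_spec

lemma unsel_spec {sel : List ℤ → Bool} {H : List ℤ} (hs : sel H = false) (h : HumpOK sel H) :
    H ≠ [] ∧ ∀ c, 0 ≤ pref H c := by
  rw [HumpOK, hs] at h
  simpa using h

lemma kk_unsel {sel : List ℤ → Bool} {H : List ℤ} (hs : sel H = false) : kk sel H = 0 := by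
  rw [kk]
  split
  · rw [hs]; simp
  · rfl

lemma kk_lt {sel : List ℤ → Bool} {H : List ℤ} (h : HumpOK sel H) : kk sel H < H.length := by
  cases hs : sel H with
  | true => exact (kk_sel hs h).1
  | false =>
    rw [kk_unsel hs]
    have := (unsel_spec hs h).1
    cases H
    · exact absurd rfl this
    · simp

lemma unsel_cost_nonneg {sel : List ℤ → Bool} {H : List ℤ} (hs : sel H = false)
    (h : HumpOK sel H) : 0 ≤ cost H := by
  have := (unsel_spec hs h).2 H.length
  rwa [pref_of_len_le (le_refl _)] at this

noncomputable def csel (sel : List ℤ → Bool) : List (List ℤ) → ℕ → List (List ℤ)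
  | [], _ => []
  | H :: T, c => if kk sel H + 1 ≤ c then (if sel H then [H] else []) ++ csel sel T (c - H.length) else []

@[simp] lemma csel_nil (sel : List ℤ → Bool) (c : ℕ) : csel sel [] c = [] := rfl

@[simp] lemma csel_zero (sel : List ℤ → Bool) (Hs : List (List ℤ)) : csel sel Hs 0 = [] := by
  cases Hs with
  | nil => rfl
  | cons H T => rw [csel, if_neg (by omega)]

def costsum (X : List (List ℤ)) : ℤ := (X.map cost).sum

@[simp] lemma costsum_nil : costsum [] = 0 := rfl
@[simp] lemma costsum_append (X Y : List (List ℤ)) : costsum (X ++ Y) = costsum X + costsum Y := by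
  simp [costsum]
@[simp] lemma costsum_cons (H : List ℤ) (X : List (List ℤ)) : costsum (H :: X) = cost H + costsum X := by
  simp [costsum]

lemma pref_flatten_cons (H : List ℤ) (T : List (List ℤ)) (c : ℕ) :
    pref ((H :: T).flatten) c = pref H c + pref T.flatten (c - H.length) := by
  simp only [List.flatten_cons, pref, List.take_append, List.sum_append]

lemma csel_costsum_le (sel : List ℤ → Bool) :
    ∀ (Hs : List (List ℤ)), (∀ H ∈ Hs, HumpOK sel H) → ∀ c,
      costsum (csel sel Hs c) ≤ pref Hs.flatten c := by
  intro Hs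
  induction Hs with
  | nil => intro _ c; simp [pref]
  | cons H T ih =>
    intro hOK c
    have hH := hOK H (by simp)
    have hT := fun H' h' => hOK H' (List.mem_cons_of_mem _ h')
    rw [pref_flatten_cons]
    by_cases hg : kk sel H + 1 ≤ c
    · rw [csel, if_pos hg, costsum_append]
      have h1 : costsum (if sel H then [H] else []) ≤ pref H c := by
        cases hs : sel H with
        | true =>
          rw [if_pos rfl]
          have := (kk_sel hs hH).2.2.1 c (by omega)
          simpa [costsum] using this
        | false =>
          rw [if_neg (by simp)]
          simpa [costsum] using (unsel_spec hs hH).2 c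
      have h2 := ih hT (c - H.length)
      omega
    · rw [csel, if_neg hg, costsum_nil]
      have h1 : 0 ≤ pref H c := by
        cases hs : sel H with
        | true => exact (kk_sel hs hH).2.1 c (by omega)
        | false => exact (unsel_spec hs hH).2 c
      have h2 : c - H.length = 0 := by
        have := kk_lt hH; omega
      rw [h2, pref_zero]
      omega

lemma csel_step (sel : List ℤ → Bool) :
    ∀ (Hs : List (List ℤ)), (∀ H ∈ Hs, HumpOK sel H) → ∀ c,
      csel sel Hs (c + 1) = csel sel Hs c ∨
      ∃ H, sel H = true ∧ height H = max 0 (pref H (kk sel H + 1)) ∧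
        csel sel Hs (c + 1) = csel sel Hs c ++ [H] ∧
        costsum (csel sel Hs c) + pref H (kk sel H + 1) ≤ pref Hs.flatten (c + 1) := by
  intro Hs
  induction Hs with
  | nil => intro _ c; left; rfl
  | cons H T ih =>
    intro hOK c
    have hH := hOK H (by simp)
    have hT := fun H' h' => hOK H' (List.mem_cons_of_mem _ h')
    have hkl := kk_lt hH
    rcases Nat.lt_or_ge c (kk sel H) with hc | hc
    · -- both gates false
      left
      rw [csel, if_neg (by omega), csel, if_neg (by omega)]
    rcases eq_or_lt_of_le hc with hceq | hclt
    · -- c = kk sel H : gate false for c, true for c+1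
      have hgc : ¬ (kk sel H + 1 ≤ c) := by omega
      have hgc1 : kk sel H + 1 ≤ c + 1 := by omega
      have harg : c + 1 - H.length = 0 := by omega
      rw [csel, if_pos hgc1, harg, csel_zero, List.append_nil]
      cases hs : sel H with
      | false => left; rw [if_neg (by simp), csel, if_neg hgc]
      | true =>
        right
        refine ⟨H, hs, (kk_sel hs hH).2.2.2, ?_, ?_⟩
        · rw [if_pos rfl, csel, if_neg hgc]; simp
        · rw [csel, if_neg hgc, costsum_nil, pref_flatten_cons, harg, pref_zero]
          rw [hceq]
          omega
    · -- kk sel H + 1 ≤ c : both gates true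
      have hgc : kk sel H + 1 ≤ c := hclt
      have hgc1 : kk sel H + 1 ≤ c + 1 := by omega
      rcases Nat.lt_or_ge c H.length with hcl | hcl
      · -- c < len H : both recursive args are 0
        left
        have h1 : c - H.length = 0 := by omega
        have h2 : c + 1 - H.length = 0 := by omega
        rw [csel, if_pos hgc1, h2, csel_zero, csel, if_pos hgc, h1, csel_zero]
      · -- c ≥ len H
        have h2 : c + 1 - H.length = (c - H.length) + 1 := by omega
        rcases ih hT (c - H.length) with heq | ⟨H', hs', hh', he', hb'⟩
        · left
          rw [csel, if_pos hgc1, h2, heq, csel, if_pos hgc]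
        · right
          refine ⟨H', hs', hh', ?_, ?_⟩
          · rw [csel, if_pos hgc1, h2, he', csel, if_pos hgc, List.append_assoc]
          · rw [csel, if_pos hgc, costsum_append, pref_flatten_cons, h2]
            have h3 : costsum (if sel H then [H] else []) ≤ pref H (c + 1) := by
              cases hs : sel H with
              | true =>
                rw [if_pos rfl]
                have := (kk_sel hs hH).2.2.1 (c + 1) (by omega)
                simpa [costsum] using this
              | false =>
                rw [if_neg (by simp)]
                simpa [costsum] using (unsel_spec hs hH).2 (c + 1)
            omega

lemma csel_full (sel : List ℤ → Bool) :
    ∀ (Hs : List (List ℤ)), (∀ H ∈ Hs, HumpOK sel H) → ∀ c, Hs.flatten.length ≤ c →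
      csel sel Hs c = Hs.filter sel := by
  intro Hs
  induction Hs with
  | nil => intro _ c _; rfl
  | cons H T ih =>
    intro hOK c hc
    have hH := hOK H (by simp)
    have hT := fun H' h' => hOK H' (List.mem_cons_of_mem _ h')
    have hlen : H.length + T.flatten.length ≤ c := by
      simpa [List.length_flatten] using hc
    have hkl := kk_lt hH
    rw [csel, if_pos (by omega), ih hT (c - H.length) (by omega)]
    cases hs : sel H with
    | true => rw [if_pos rfl, List.filter_cons_of_pos hs]; rfl
    | false => rw [if_neg (by simp), List.filter_cons_of_neg (by simp [hs])]; rfl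

end CselSec


section CoreSec

lemma cost_flatten (X : List (List ℤ)) : cost X.flatten = costsum X := by
  induction X with
  | nil => rfl
  | cons H T ih => simp [cost, costsum] at *; omega

lemma costsum_flatten (l : List (List (List ℤ))) : costsum l.flatten = (l.map costsum).sum := by
  induction l with
  | nil => rfl
  | cons x t ih => simp [ih]

lemma costsum_flatten_ofFn (f : Fin p → List (List ℤ)) :
    costsum (List.ofFn f).flatten = ∑ i, costsum (f i) := by
  rw [costsum_flatten, List.map_ofFn, List.sum_ofFn]
  rfl

lemma set_append_singleton_flatten_perm {α : Type*} :
    ∀ (l : List (List α)) (n : ℕ) (hn : n < l.length) (x : α),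
      ((l.set n (l[n] ++ [x])).flatten).Perm (l.flatten ++ [x]) := by
  intro l
  induction l with
  | nil => intro n hn; simp at hn
  | cons a t ih =>
    intro n hn x
    cases n with
    | zero =>
      simp only [List.set_cons_zero, List.flatten_cons, List.getElem_cons_zero]
      rw [List.append_assoc, List.append_assoc]
      exact (List.perm_append_comm (l₁ := [x]) (l₂ := t.flatten)).append_left a
    | succ n =>
      simp only [List.set_cons_succ, List.flatten_cons, List.getElem_cons_succ]
      rw [List.append_assoc]
      have := (ih n (by simpa using hn) x).append_left a
      simpa using this

lemma flatten_ofFn_update_perm (f f' : Fin p → List (List ℤ)) (i : Fin p) (H : List ℤ)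
    (hne : ∀ j, j ≠ i → f' j = f j) (hi : f' i = f i ++ [H]) :
    ((List.ofFn f').flatten).Perm ((List.ofFn f).flatten ++ [H]) := by
  have hip : (i : ℕ) < (List.ofFn f).length := by simp [i.isLt]
  have heq : List.ofFn f' = (List.ofFn f).set i ((List.ofFn f)[(i : ℕ)] ++ [H]) := by
    apply List.ext_getElem
    · simp
    · intro n h1 h2
      rw [List.getElem_set]
      rcases eq_or_ne (i : ℕ) n with he | hne'
      · rw [if_pos he]
        subst he
        simp only [List.getElem_ofFn, Fin.eta]
        exact hi
      · rw [if_neg hne']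
        have h3 : n < p := by simpa using h1
        rw [List.getElem_ofFn, List.getElem_ofFn]
        exact hne _ (fun hc => hne' (by rw [← hc]))
  rw [heq]
  exact set_append_singleton_flatten_perm (List.ofFn f) i hip H

theorem core (C : Fin p → List ℤ) (D : Fin p → List (List ℤ)) (sel : List ℤ → Bool)
    (hD : ∀ i, (D i).flatten = C i) (hOK : ∀ i, ∀ H ∈ D i, HumpOK sel H)
    (w : List (Fin p)) (hw : IsSched C w) :
    ∃ σL : List (List ℤ), σL.Perm ((List.ofFn (fun i => (D i).filter sel)).flatten) ∧
      height σL.flatten ≤ height (realize C w) := by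
  have main : ∀ u : List (Fin p), IsSub C u →
      ∃ σL : List (List ℤ),
        σL.Perm ((List.ofFn (fun i => csel sel (D i) (u.count i))).flatten) ∧
        height σL.flatten ≤ height (realize C u) := by
    intro u
    induction u using List.reverseRecOn with
    | nil =>
      intro _
      refine ⟨[], ?_, by simp [height_nonneg]⟩
      have : (fun i : Fin p => csel sel (D i) ((List.nil (α := Fin p)).count i))
          = fun i : Fin p => ([] : List (List ℤ)) := by
        funext i; simp
      rw [this]
      have : (List.ofFn fun _ : Fin p => ([] : List (List ℤ))).flatten = [] := by
        simp [List.flatten_eq_nil_iff]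
      rw [this]
    | append_singleton u i ih =>
      intro hsub
      have hsubu : IsSub C u := hsub.prefix
      obtain ⟨σL, hperm, hh⟩ := ih hsubu
      have hcnt : ∀ j, (u ++ [i]).count j = u.count j + (if j = i then 1 else 0) := by
        intro j
        rcases eq_or_ne j i with rfl | hj
        · simp [List.count_append]
        · simp [List.count_append, List.count_singleton', beq_iff_eq, hj, Ne.symm hj]
      have hmono : height (realize C u) ≤ height (realize C (u ++ [i])) := by
        rw [realize_append]; exact height_prefix_le _ _
      rcases csel_step sel (D i) (hOK i) (u.count i) with heq | ⟨H, hs, hh', he', hb'⟩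
      · refine ⟨σL, ?_, le_trans hh hmono⟩
        have : (fun j => csel sel (D j) ((u ++ [i]).count j))
            = fun j => csel sel (D j) (u.count j) := by
          funext j
          rw [hcnt j]
          rcases eq_or_ne j i with rfl | hj
          · rw [if_pos rfl, heq]
          · rw [if_neg hj, add_zero]
        rw [this]
        exact hperm
      · refine ⟨σL ++ [H], ?_, ?_⟩
        · have h1 : (σL ++ [H]).Perm
              ((List.ofFn (fun j => csel sel (D j) (u.count j))).flatten ++ [H]) :=
            hperm.append_right [H]
          have h2 := flatten_ofFn_update_perm
            (fun j => csel sel (D j) (u.count j))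
            (fun j => csel sel (D j) ((u ++ [i]).count j)) i H
            (by
              intro j hj
              simp only [hcnt j, if_neg hj, add_zero])
            (by
              simp only [hcnt i, if_pos rfl]
              exact he')
          exact h1.trans h2.symm
        · have hflat : (σL ++ [H]).flatten = σL.flatten ++ H := by simp
          rw [hflat, height_append]
          have hcs : cost σL.flatten = ∑ j, costsum (csel sel (D j) (u.count j)) := by
            rw [cost_flatten]
            have := (hperm.map cost).sum_eq
            rw [← costsum_flatten_ofFn]
            exact this
          have hsum1 : ∑ j, costsum (csel sel (D j) (u.count j)) ≤ (realize C u).sum := by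
            rw [sum_realize hsubu]
            apply Finset.sum_le_sum
            intro j _
            have := csel_costsum_le sel (D j) (hOK j) (u.count j)
            rwa [hD j] at this
          have hsum2 : ∑ j, costsum (csel sel (D j) (u.count j)) + pref H (kk sel H + 1)
              ≤ (realize C (u ++ [i])).sum := by
            rw [sum_realize hsub]
            have key : ∀ j, costsum (csel sel (D j) (u.count j))
                + (if j = i then pref H (kk sel H + 1) else 0)
                ≤ ((C j).take ((u ++ [i]).count j)).sum := by
              intro j
              rcases eq_or_ne j i with rfl | hj
              · rw [if_pos rfl, hcnt j, if_pos rfl]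
                have := hb'
                rw [hD j] at this
                exact this
              · rw [if_neg hj, hcnt j, if_neg hj, add_zero]
                have := csel_costsum_le sel (D j) (hOK j) (u.count j)
                rwa [hD j] at this
            calc ∑ j, costsum (csel sel (D j) (u.count j)) + pref H (kk sel H + 1)
                = ∑ j, (costsum (csel sel (D j) (u.count j))
                    + (if j = i then pref H (kk sel H + 1) else 0)) := by
                  rw [Finset.sum_add_distrib]
                  simp
              _ ≤ ∑ j, ((C j).take ((u ++ [i]).count j)).sum :=
                  Finset.sum_le_sum (fun j _ => key j)
          rw [max_le_iff]
          refine ⟨le_trans hh hmono, ?_⟩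
          rw [hcs, hh']
          have hA : (realize C u).sum ≤ height (realize C u) := sum_le_height _
          have hB : (realize C (u ++ [i])).sum ≤ height (realize C (u ++ [i])) := sum_le_height _
          rcases le_total (pref H (kk sel H + 1)) 0 with h | h
          · rw [max_eq_left h]
            omega
          · rw [max_eq_right h]
            omega
  obtain ⟨σL, hperm, hh⟩ := main w (fun i => le_of_eq (hw i))
  refine ⟨σL, ?_, hh⟩
  have : (fun i => csel sel (D i) (w.count i)) = fun i => (D i).filter sel := by
    funext i
    apply csel_full sel (D i) (hOK i)
    rw [hD i, hw i]
  rwa [this] at hperm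

end CoreSec

section SortSec

def SP' (B A : List ℤ) : Prop := cost B ≤ 0 ∧ cost A ≤ 0 ∧ height B ≤ height A

lemma swap_SP {B A : List ℤ} (h : StandardPair B A) : height (B ++ A) ≤ height (A ++ B) := by
  have hA := height_nonneg A
  have hB := height_nonneg B
  rw [height_append, height_append]
  rcases h with ⟨h1, h2, h3⟩ | ⟨h1, h2, h3⟩ | ⟨h1, h2⟩
  · exact max_le (le_trans h3 (le_max_left _ _)) (le_trans (by omega) (le_max_left _ _))
  · simp only [fall] at h3
    exact max_le (le_trans (by omega) (le_max_right _ _))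
      (le_trans (by omega) (le_max_right _ _))
  · exact max_le (le_trans (by omega) (le_max_right _ _))
      (le_trans (by omega) (le_max_left _ _))

lemma swap_SP' {B A : List ℤ} (h : SP' B A) : height (B ++ A) ≤ height (A ++ B) := by
  obtain ⟨h1, h2, h3⟩ := h
  have hA := height_nonneg A
  have hB := height_nonneg B
  rw [height_append, height_append]
  exact max_le (le_trans h3 (le_max_left _ _)) (le_trans (by omega) (le_max_left _ _))

lemma height_flatten_cons (H : List ℤ) (T : List (List ℤ)) :
    height ((H :: T).flatten) = max (height H) (cost H + height T.flatten) := by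
  rw [List.flatten_cons, height_append]

lemma move_front {r : List ℤ → List ℤ → Prop}
    (hr : ∀ B A, r B A → height (B ++ A) ≤ height (A ++ B)) (A : List ℤ) :
    ∀ (M1 M2 : List (List ℤ)), (∀ X ∈ M1, r A X) →
      height ((A :: (M1 ++ M2)).flatten) ≤ height ((M1 ++ A :: M2).flatten) := by
  intro M1
  induction M1 with
  | nil => intro M2 _; simp
  | cons X M1' ih =>
    intro M2 hAX
    have step1 : height ((A :: (X :: M1' ++ M2)).flatten)
        ≤ height ((X :: A :: (M1' ++ M2)).flatten) := by
      have hsw := hr A X (hAX X (by simp))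
      have hc : cost (A ++ X) = cost (X ++ A) := by simp [cost]; ring
      have e1 : (A :: (X :: M1' ++ M2)).flatten = (A ++ X) ++ (M1' ++ M2).flatten := by simp
      have e2 : (X :: A :: (M1' ++ M2)).flatten = (X ++ A) ++ (M1' ++ M2).flatten := by simp
      rw [e1, e2, height_append (A ++ X) ((M1' ++ M2).flatten), height_append (X ++ A) ((M1' ++ M2).flatten), hc]
      exact max_le_max hsw (le_refl _)
    have step2 : height ((X :: A :: (M1' ++ M2)).flatten)
        ≤ height ((X :: (M1' ++ A :: M2)).flatten) := by
      rw [height_flatten_cons X (A :: (M1' ++ M2)), height_flatten_cons X (M1' ++ A :: M2)]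
      have := ih M2 (fun Y hY => hAX Y (by simp [hY]))
      exact max_le_max (le_refl _) (by omega)
    calc height ((A :: (X :: M1' ++ M2)).flatten)
        ≤ height ((X :: A :: (M1' ++ M2)).flatten) := step1
      _ ≤ height ((X :: (M1' ++ A :: M2)).flatten) := step2

lemma sort_min {r : List ℤ → List ℤ → Prop}
    (hr : ∀ B A, r B A → height (B ++ A) ≤ height (A ++ B)) :
    ∀ (L M : List (List ℤ)), L.Pairwise r → L.Perm M →
      height L.flatten ≤ height M.flatten := by
  intro L
  induction L with
  | nil =>
    intro M _ hp
    rw [hp.symm.eq_nil]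
  | cons A L' ih =>
    intro M hpw hp
    have hmem : A ∈ M := hp.subset (by simp)
    obtain ⟨M1, M2, rfl⟩ := List.append_of_mem hmem
    have hp' : L'.Perm (M1 ++ M2) := (hp.trans List.perm_middle).cons_inv
    rw [List.pairwise_cons] at hpw
    have h1 : height ((A :: L').flatten) ≤ height ((A :: (M1 ++ M2)).flatten) := by
      rw [height_flatten_cons, height_flatten_cons]
      have := ih (M1 ++ M2) hpw.2 hp'
      exact max_le_max (le_refl _) (by omega)
    have h2 : height ((A :: (M1 ++ M2)).flatten) ≤ height ((M1 ++ A :: M2).flatten) :=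
      move_front hr A M1 M2
        (fun X hX => hpw.1 X (hp'.symm.subset (by simp [hX])))
    exact le_trans h1 h2

lemma flatten_ofFn_perm {α : Type*} {n : ℕ} (f g : Fin n → List α)
    (h : ∀ i, (f i).Perm (g i)) :
    ((List.ofFn f).flatten).Perm ((List.ofFn g).flatten) := by
  induction n with
  | zero => simp
  | succ n ihn =>
    rw [List.ofFn_succ, List.ofFn_succ, List.flatten_cons, List.flatten_cons]
    exact (h 0).append (ihn _ _ (fun i => h i.succ))

end SortSec

section FinalSec

lemma humpok_primal {H : List ℤ} (hH : IsHump H) :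
    HumpOK (fun H => decide (cost H < 0)) H := by
  unfold HumpOK
  by_cases h : cost H < 0
  · rw [if_pos (by simpa using h)]
    exact selokat_of_hump hH
  · rw [if_neg (by simpa using h)]
    obtain ⟨k, hk⟩ := selokat_of_hump hH
    exact ⟨hH.1, allpref_nonneg hk (by omega)⟩

lemma humpok_dual {H : List ℤ} (hH : IsHump H) :
    HumpOK (fun H => decide (cost H ≤ 0)) (NL H) := by
  unfold HumpOK
  by_cases h : cost (NL H) ≤ 0
  · rw [if_pos (by simpa using h)]
    rw [cost_NL] at h
    exact dual_sel hH (by omega)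
  · rw [if_neg (by simpa using h)]
    rw [cost_NL] at h
    exact dual_unsel hH (by omega)

lemma pairwise_split {l : List (List ℤ)} (h : l.Pairwise StandardPair) :
    l = l.filter (fun H => decide (cost H < 0)) ++ l.filter (fun H => !decide (cost H < 0)) := by
  induction l with
  | nil => rfl
  | cons H T ih =>
    rw [List.pairwise_cons] at h
    by_cases hc : cost H < 0
    · rw [List.filter_cons_of_pos (by simpa using hc), List.filter_cons_of_neg (by simpa using hc),
        List.cons_append, ← ih h.2]
    · have hTpos : ∀ X ∈ T, ¬ (cost X < 0) := by
        intro X hX hXneg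
        rcases h.1 X hX with ⟨h1, _⟩ | ⟨_, h2, _⟩ | ⟨h1, _⟩ <;> omega
      rw [List.filter_cons_of_neg (by simpa using hc), List.filter_cons_of_pos (by simpa using hc)]
      have h1 : T.filter (fun H => decide (cost H < 0)) = [] :=
        List.filter_eq_nil_iff.mpr (by intro a ha; simpa using hTpos a ha)
      have h2 : T.filter (fun H => !decide (cost H < 0)) = T :=
        List.filter_eq_self.mpr (by intro a ha; simpa using hTpos a ha)
      rw [h1, h2]
      rfl

lemma cost_realize_sched {C : Fin p → List ℤ} {w : List (Fin p)} (hw : IsSched C w) :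
    (realize C w).sum = ∑ i, (C i).sum := by
  rw [sum_realize (fun i => le_of_eq (hw i))]
  apply Finset.sum_congr rfl
  intro i _
  rw [hw i, List.take_length]

/-- Any schedule realizing the concatenation, in standard order, of all the
humps of all the chains is an optimal schedule. -/
theorem merge_optimal (C : Fin p → List ℤ) (D : Fin p → List (List ℤ))
    (hD : ∀ i, IsDecomp (C i) (D i))
    (w : List (Fin p)) (blocks : List (List ℤ))
    (hsch : IsSched C w)
    (hreal : realize C w = blocks.flatten)
    (hperm : blocks.Perm (List.ofFn D).flatten)
    (hstd : blocks.Pairwise StandardPair) :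
    ∀ w', IsSched C w' → height (realize C w) ≤ height (realize C w') := by
  intro w' hw'
  rw [hreal]
  have hDf : ∀ i, (D i).flatten = C i := fun i => (hD i).1
  have hDh : ∀ i, ∀ H ∈ D i, IsHump H := fun i => (hD i).2.1
  set negb : List ℤ → Bool := fun H => decide (cost H < 0) with hnegb
  set posb : List ℤ → Bool := fun H => !decide (cost H < 0) with hposb
  set selD : List ℤ → Bool := fun H => decide (cost H ≤ 0) with hselD
  have hsplit : blocks = blocks.filter negb ++ blocks.filter posb := pairwise_split hstd
  -- Branch A : negative blocks
  obtain ⟨σ1, hσ1p, hσ1h⟩ :=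
    core C D negb hDf (fun i H hH => humpok_primal (hDh i H hH)) w' hw'
  have hBnegperm : (blocks.filter negb).Perm σ1 := by
    have h1 : (blocks.filter negb).Perm (((List.ofFn D).flatten).filter negb) :=
      hperm.filter negb
    have h2 : ((List.ofFn D).flatten).filter negb
        = (List.ofFn (fun i => (D i).filter negb)).flatten := by
      rw [List.filter_flatten, List.map_ofFn]
      rfl
    rw [h2] at h1
    exact h1.trans hσ1p.symm
  have hA : height (blocks.filter negb).flatten ≤ height (realize C w') :=
    le_trans (sort_min (fun B A h => swap_SP h) _ σ1 (hstd.filter negb) hBnegperm) hσ1h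
  -- Branch B : dual, nonnegative blocks
  set C2 : Fin p → List ℤ := fun i => NL (C i) with hC2
  set D2 : Fin p → List (List ℤ) := fun i => ((D i).map NL).reverse with hD2
  have hD2f : ∀ i, (D2 i).flatten = C2 i := by
    intro i
    simp only [hD2, hC2]
    rw [NL_flatten, hDf]
  have hOK2 : ∀ i, ∀ H' ∈ D2 i, HumpOK selD H' := by
    intro i H' hH'
    simp only [hD2, List.mem_reverse, List.mem_map] at hH'
    obtain ⟨H, hH, rfl⟩ := hH'
    exact humpok_dual (hDh i H hH)
  have hw2 : IsSched C2 w'.reverse := by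
    intro i
    rw [List.count_reverse, hw' i]
    simp [hC2, length_NL]
  obtain ⟨σ2, hσ2p, hσ2h⟩ := core C2 D2 selD hD2f hOK2 w'.reverse hw2
  have hrev : realize C2 w'.reverse = NL (realize C w') := realize_rev hw'
  have hselNL : ∀ H : List ℤ, selD (NL H) = posb H := by
    intro H
    simp only [hselD, hposb, cost_NL]
    by_cases h : cost H < 0
    · rw [decide_eq_false (by omega), decide_eq_true h]
      rfl
    · rw [decide_eq_true (by omega), decide_eq_false h]
      rfl
  set Bpos := blocks.filter posb with hBpos
  have hDposperm : ((Bpos.map NL).reverse).Perm σ2 := by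
    set mid := (List.ofFn (fun i => ((D i).filter posb).map NL)).flatten with hmid
    have hL : ((Bpos.map NL).reverse).Perm mid := by
      have h1 : (Bpos.map NL).Perm ((((List.ofFn D).flatten).filter posb).map NL) :=
        (hperm.filter posb).map NL
      have h2 : (((List.ofFn D).flatten).filter posb).map NL = mid := by
        rw [List.filter_flatten, List.map_ofFn, List.map_flatten, List.map_ofFn]
        rfl
      exact (List.reverse_perm _).trans (h2 ▸ h1)
    have hR : σ2.Perm mid := by
      have h3 : ∀ i, (D2 i).filter selD = (((D i).filter posb).map NL).reverse := by
        intro i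
        simp only [hD2]
        rw [List.filter_reverse, List.filter_map]
        have hf : (selD ∘ NL) = posb := funext (fun H => hselNL H)
        rw [hf]
      have h4 : (List.ofFn (fun i => (D2 i).filter selD)).flatten.Perm mid := by
        rw [hmid]
        have := flatten_ofFn_perm (fun i => (((D i).filter posb).map NL).reverse)
          (fun i => ((D i).filter posb).map NL) (fun i => List.reverse_perm _)
        have h5 : (fun i => (D2 i).filter selD)
            = fun i => (((D i).filter posb).map NL).reverse := funext h3
        rw [h5]
        exact this
      exact hσ2p.trans h4
    exact hL.trans hR.symm
  have hpw2 : ((Bpos.map NL).reverse).Pairwise SP' := by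
    rw [List.pairwise_reverse, List.pairwise_map]
    apply List.Pairwise.imp_of_mem ?_ (hstd.filter posb)
    intro a b ha hb hab
    have ha' : ¬ (cost a < 0) := by
      have := (List.mem_filter.mp ha).2
      simpa [hposb] using this
    have hb' : ¬ (cost b < 0) := by
      have := (List.mem_filter.mp hb).2
      simpa [hposb] using this
    rcases hab with ⟨h1, _⟩ | ⟨_, _, h3⟩ | ⟨h1, _⟩
    · omega
    · refine ⟨by rw [cost_NL]; omega, by rw [cost_NL]; omega, ?_⟩
      rw [← fall_eq_height_NL, ← fall_eq_height_NL]
      exact h3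
    · omega
  have hB2 : height ((Bpos.map NL).reverse).flatten ≤ height (NL (realize C w')) :=
    le_trans (sort_min (fun B A h => swap_SP' h) _ σ2 hpw2 hDposperm)
      (by rw [← hrev]; exact hσ2h)
  have hBposNL : height (NL Bpos.flatten) ≤ height (NL (realize C w')) := by
    rw [← NL_flatten]
    exact hB2
  -- cost identities
  have hcost' : cost (realize C w') = cost blocks.flatten := by
    have e1 : (realize C w').sum = ∑ i, (C i).sum := cost_realize_sched hw'
    have e2 : (realize C w).sum = ∑ i, (C i).sum := cost_realize_sched hsch
    rw [cost, cost, ← hreal, e1, e2]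
  -- combine
  have hflat : blocks.flatten = (blocks.filter negb).flatten ++ Bpos.flatten := by
    conv_lhs => rw [hsplit]
    rw [List.flatten_append]
  rw [hflat, height_append, max_le_iff]
  refine ⟨hA, ?_⟩
  have e1 : height Bpos.flatten = cost Bpos.flatten + height (NL Bpos.flatten) :=
    height_eq_cost_add_height_NL _
  have e2 : height (realize C w') = cost (realize C w') + height (NL (realize C w')) :=
    height_eq_cost_add_height_NL _
  have e3 : cost (blocks.filter negb).flatten + cost Bpos.flatten = cost blocks.flatten := by
    rw [hflat]
    simp [cost]
  omega

end FinalSec
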